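/- Let G₁ and G₂ be simple graphs and let k₁, k₂ be natural numbers with k₁, k₂ ≥ 1. If G₁ contains no clique of size k₁ and G₂ contains no clique of size k₂, then the Naor product G₁ · G₂ contains no clique of size (k₁ − 1)·(k₂ − 1) + 1; in particular it contains no clique of size k₁·k₂. -/

import Mathlib

/-- The Naor product of two simple graphs: vertices `(u₁,u₂)` and `(v₁,v₂)` are adjacent
iff `u₁` is adjacent to `v₁` in `G₁`, or `u₁ = v₁` and `u₂` is adjacent to `v₂` in `G₂`. -/
def naorProd {V₁ V₂ : Type*} (G₁ : SimpleGraph V₁) (G₂ : SimpleGraph V₂) :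
    SimpleGraph (V₁ × V₂) where
  Adj x y := G₁.Adj x.1 y.1 ∨ (x.1 = y.1 ∧ G₂.Adj x.2 y.2)
  symm := by
    constructor
    rintro ⟨u₁, u₂⟩ ⟨v₁, v₂⟩ (h | ⟨h₁, h₂⟩)
    · exact Or.inl h.symm
    · exact Or.inr ⟨h₁.symm, h₂.symm⟩
  loopless := by
    constructor
    rintro ⟨u₁, u₂⟩ (h | ⟨-, h⟩)
    · exact G₁.irrefl h
    · exact G₂.irrefl h

lemma clique_card_lt {V : Type*} {G : SimpleGraph V} {k : ℕ} (h : G.CliqueFree k)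
    {s : Finset V} (hs : G.IsClique ↑s) : s.card < k := by
  by_contra hlt
  push_neg at hlt
  obtain ⟨t, hts, htc⟩ := Finset.exists_subset_card_eq hlt
  exact h t ⟨hs.subset (by exact_mod_cast hts), htc⟩

/-- If `G₁` has no `k₁`-clique and `G₂` has no `k₂`-clique, then the Naor product has no
clique of size `(k₁-1)(k₂-1)+1`; in particular it has no clique of size `k₁·k₂`. -/
theorem naorProd_cliqueFree {V₁ V₂ : Type*} (G₁ : SimpleGraph V₁) (G₂ : SimpleGraph V₂)
    (k₁ k₂ : ℕ) (hk₁ : 1 ≤ k₁) (hk₂ : 1 ≤ k₂)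
    (h₁ : G₁.CliqueFree k₁) (h₂ : G₂.CliqueFree k₂) :
    (naorProd G₁ G₂).CliqueFree ((k₁ - 1) * (k₂ - 1) + 1) ∧
      (naorProd G₁ G₂).CliqueFree (k₁ * k₂) := by
  have main : (naorProd G₁ G₂).CliqueFree ((k₁ - 1) * (k₂ - 1) + 1) := by
    intro s hs
    classical
    obtain ⟨hc, hcard⟩ := hs
    set t : Finset V₁ := s.image Prod.fst with ht
    -- t is a clique in G₁
    have htc : G₁.IsClique ↑t := by
      intro a ha b hb hab
      simp only [ht, Finset.coe_image, Set.mem_image] at ha hb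
      obtain ⟨x, hx, rfl⟩ := ha
      obtain ⟨y, hy, rfl⟩ := hb
      have hxy : x ≠ y := fun h => hab (by rw [h])
      rcases hc hx hy hxy with h | ⟨he, _⟩
      · exact h
      · exact absurd he hab
    have ht1 : t.card ≤ k₁ - 1 := Nat.le_sub_one_of_lt (clique_card_lt h₁ htc)
    -- fiber counts
    have hfib : ∀ a ∈ t, (s.filter fun x => x.1 = a).card ≤ k₂ - 1 := by
      intro a _
      apply Nat.le_sub_one_of_lt
      have himg : ((s.filter fun x => x.1 = a).image Prod.snd).card =
          (s.filter fun x => x.1 = a).card := by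
        apply Finset.card_image_of_injOn
        intro x hx y hy hxy
        simp only [Finset.coe_filter, Set.mem_setOf_eq] at hx hy
        exact Prod.ext (hx.2.trans hy.2.symm) hxy
      rw [← himg]
      apply clique_card_lt h₂
      intro u hu v hv huv
      simp only [Finset.coe_image, Set.mem_image, Finset.mem_coe, Finset.mem_filter] at hu hv
      obtain ⟨x, ⟨hx, hxa⟩, rfl⟩ := hu
      obtain ⟨y, ⟨hy, hya⟩, rfl⟩ := hv
      have hxy : x ≠ y := fun h => huv (by rw [h])
      rcases hc hx hy hxy with h | ⟨_, h⟩
      · exact absurd (hxa.trans hya.symm) h.ne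
      · exact h
    have hsum : s.card = ∑ a ∈ t, (s.filter fun x => x.1 = a).card :=
      Finset.card_eq_sum_card_fiberwise fun x hx => Finset.mem_image_of_mem _ hx
    have : s.card ≤ (k₁ - 1) * (k₂ - 1) := by
      rw [hsum]
      calc ∑ a ∈ t, (s.filter fun x => x.1 = a).card ≤ ∑ _a ∈ t, (k₂ - 1) :=
            Finset.sum_le_sum hfib
        _ = t.card * (k₂ - 1) := by rw [Finset.sum_const, smul_eq_mul]
        _ ≤ (k₁ - 1) * (k₂ - 1) := Nat.mul_le_mul_right _ ht1
    omega
  refine ⟨main, main.mono ?_⟩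
  have : (k₁ - 1) * (k₂ - 1) + 1 ≤ k₁ * k₂ := by
    cases k₁ with
    | zero => omega
    | succ a => cases k₂ with
      | zero => omega
      | succ b => simp [Nat.succ_mul, Nat.mul_succ]; nlinarith
  exact this
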